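/- Let A(r) = (2/r) · Σ_{n=0}^{2r−1} 1 / (cos(nπ/(4r)) + sin(nπ/(4r))) for positive integers r. Then as r → ∞, A(r) converges to (4√2/π) · (ln(2+√2) − ln(2−√2)) (≈ 3.17406), which equals (8√2/π)·arctanh(1/√2). -/

import Mathlib

open Filter

open Filter intervalIntegral in
lemma riemann_sum_tendsto {f : ℝ → ℝ} {b : ℝ} (hb : 0 < b)
    (hf : ContinuousOn f (Set.Icc 0 b)) :
    Tendsto (fun N : ℕ => ∑ n ∈ Finset.range N, (b / N) * f (n * (b / N)))
      atTop (nhds (∫ x in (0:ℝ)..b, f x)) := by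
  rw [Metric.tendsto_atTop]
  intro ε hε
  have hu := isCompact_Icc.uniformContinuousOn_of_continuous hf
  rw [Metric.uniformContinuousOn_iff] at hu
  have hCpos : 0 < ε / (2 * b) := by positivity
  obtain ⟨δ, hδ, H⟩ := hu _ hCpos
  obtain ⟨R, hR⟩ := exists_nat_gt (b / δ)
  refine ⟨R + 1, fun N hN => ?_⟩
  have hN1 : 1 ≤ N := le_trans (Nat.le_add_left 1 R) hN
  have hNpos : (0:ℝ) < N := by exact_mod_cast hN1
  set h := b / (N:ℝ) with hh
  have hhpos : 0 < h := div_pos hb hNpos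
  have hhδ : h < δ := by
    rw [hh, div_lt_iff₀ hNpos]
    have h1 : b / δ < (N:ℝ) := lt_of_lt_of_le hR (by exact_mod_cast le_trans (Nat.le_succ R) hN)
    calc b = (b/δ)*δ := by field_simp
    _ < (N:ℝ) * δ := mul_lt_mul_of_pos_right h1 hδ
    _ = δ * N := mul_comm _ _
  have hNh : (N:ℝ) * h = b := by rw [hh]; field_simp
  have hmem : ∀ n : ℕ, n ≤ N → (n:ℝ) * h ∈ Set.Icc (0:ℝ) b := by
    intro n hn
    constructor
    · positivity
    · rw [← hNh]
      exact mul_le_mul_of_nonneg_right (by exact_mod_cast hn) hhpos.le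
  have hsub : ∀ n : ℕ, n < N → Set.uIcc ((n:ℝ)*h) ((n+1:ℕ)*h) ⊆ Set.Icc 0 b := by
    intro n hn
    rw [Set.uIcc_of_le (by push_cast; nlinarith)]
    exact Set.Icc_subset_Icc (hmem n hn.le).1 (hmem (n+1) hn).2
  have hint : ∀ n, n < N → IntervalIntegrable f MeasureTheory.volume ((n:ℝ)*h) ((n+1:ℕ)*h) :=
    fun n hn => (hf.mono (hsub n hn)).intervalIntegrable
  have hsum : ∑ n ∈ Finset.range N, ∫ x in ((n:ℝ)*h)..((n+1:ℕ)*h), f x = ∫ x in (0:ℝ)..b, f x := by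
    rw [intervalIntegral.sum_integral_adjacent_intervals hint]
    norm_num [hNh]
  have key : ∀ n, n < N →
      ‖(h * f ((n:ℝ)*h)) - ∫ x in ((n:ℝ)*h)..((n+1:ℕ)*h), f x‖ ≤ (ε/(2*b)) * h := by
    intro n hn
    have hle : (n:ℝ)*h ≤ (n+1:ℕ)*h := by push_cast; nlinarith
    have heq : h * f ((n:ℝ)*h) = ∫ _ in ((n:ℝ)*h)..((n+1:ℕ)*h), f ((n:ℝ)*h) := by
      rw [intervalIntegral.integral_const, smul_eq_mul]
      push_cast
      ring
    rw [heq, ← intervalIntegral.integral_sub (intervalIntegrable_const) (hint n hn)]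
    have hbd := intervalIntegral.norm_integral_le_of_norm_le_const
      (f := fun x => f ((n:ℝ)*h) - f x) (C := ε/(2*b)) (a := (n:ℝ)*h) (b := ((n+1:ℕ):ℝ)*h) ?_
    · calc _ ≤ ε/(2*b) * |((n+1:ℕ):ℝ)*h - (n:ℝ)*h| := hbd
        _ = ε/(2*b) * h := by
            congr 1
            rw [abs_of_nonneg (by linarith)]
            push_cast; ring
    · intro x hx
      rw [Set.uIoc_of_le hle] at hx
      have hx1 : x ∈ Set.Icc (0:ℝ) b := by
        constructor
        · have := (hmem n hn.le).1; linarith [hx.1]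
        · exact le_trans hx.2 (hmem (n+1) hn).2
      have hdist : dist ((n:ℝ)*h) x < δ := by
        rw [Real.dist_eq, abs_of_nonpos (by linarith [hx.1])]
        have : x ≤ (n:ℝ)*h + h := by
          have := hx.2; push_cast at this; linarith
        linarith
      have := H _ (hmem n hn.le) _ hx1 hdist
      rw [Real.dist_eq] at this
      exact le_of_lt this
  rw [Real.dist_eq]
  have hdiff : (∑ n ∈ Finset.range N, (b / N) * f (n * (b / N))) - ∫ x in (0:ℝ)..b, f x
      = ∑ n ∈ Finset.range N, ((h * f ((n:ℝ)*h)) - ∫ x in ((n:ℝ)*h)..((n+1:ℕ)*h), f x) := by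
    rw [Finset.sum_sub_distrib, hsum, hh]
  rw [hdiff]
  calc |∑ n ∈ Finset.range N, ((h * f ((n:ℝ)*h)) - ∫ x in ((n:ℝ)*h)..((n+1:ℕ)*h), f x)|
      ≤ ∑ n ∈ Finset.range N, ‖(h * f ((n:ℝ)*h)) - ∫ x in ((n:ℝ)*h)..((n+1:ℕ)*h), f x‖ :=
        Finset.abs_sum_le_sum_abs _ _
    _ ≤ ∑ _n ∈ Finset.range N, (ε/(2*b)) * h := Finset.sum_le_sum (fun n hn => key n (Finset.mem_range.mp hn))
    _ = (N:ℝ) * ((ε/(2*b)) * h) := by rw [Finset.sum_const, Finset.card_range, nsmul_eq_mul]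
    _ = (ε/(2*b)) * ((N:ℝ)*h) := by ring
    _ = ε/2 := by rw [hNh]; field_simp
    _ < ε := by linarith


lemma sqrt2_facts : Real.sqrt 2 * Real.sqrt 2 = 2 ∧ 1 < Real.sqrt 2 := by
  have h := Real.mul_self_sqrt (by norm_num : (0:ℝ) ≤ 2)
  refine ⟨h, ?_⟩
  nlinarith [Real.sqrt_nonneg 2]

lemma integral_val :
    ∫ x in (0:ℝ)..(Real.pi/2), 1/(Real.cos x + Real.sin x)
      = (Real.sqrt 2)⁻¹ * (Real.log (Real.sqrt 2 + 1) - Real.log (Real.sqrt 2 - 1)) := by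
  obtain ⟨h2, h1⟩ := sqrt2_facts
  have hcont : ContinuousOn (fun x => 1/(Real.cos x + Real.sin x)) (Set.Icc 0 (Real.pi/2)) := by
    apply ContinuousOn.div continuousOn_const (by fun_prop)
    intro x hx
    have hs : 0 ≤ Real.sin x := Real.sin_nonneg_of_nonneg_of_le_pi hx.1
      (le_trans hx.2 (by linarith [Real.pi_pos]))
    have hc : 0 ≤ Real.cos x := Real.cos_nonneg_of_mem_Icc
      ⟨by linarith [hx.1, Real.pi_pos], hx.2⟩
    have hp := Real.sin_sq_add_cos_sq x
    nlinarith
  have hpi : (0:ℝ) ≤ Real.pi/2 := by linarith [Real.pi_pos]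
  rw [intervalIntegral.integral_eq_sub_of_hasDerivAt
    (f := fun x => (Real.sqrt 2)⁻¹/2 * (Real.log (Real.sqrt 2 + (Real.sin x - Real.cos x))
      - Real.log (Real.sqrt 2 - (Real.sin x - Real.cos x))))
    (f' := fun x => 1/(Real.cos x + Real.sin x)) ?_ ?_]
  · simp [Real.sin_pi_div_two, Real.cos_pi_div_two, Real.sin_zero, Real.cos_zero]
    ring
  · intro x hx
    rw [Set.uIcc_of_le hpi] at hx
    have hs : 0 ≤ Real.sin x := Real.sin_nonneg_of_nonneg_of_le_pi hx.1
      (le_trans hx.2 (by linarith [Real.pi_pos]))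
    have hc : 0 ≤ Real.cos x := Real.cos_nonneg_of_mem_Icc
      ⟨by linarith [hx.1, Real.pi_pos], hx.2⟩
    have hp := Real.sin_sq_add_cos_sq x
    have hsc : 1 ≤ Real.sin x + Real.cos x := by nlinarith
    have hs1 : Real.sin x ≤ 1 := Real.sin_le_one x
    have hc1 : Real.cos x ≤ 1 := Real.cos_le_one x
    have hA : 0 < Real.sqrt 2 + (Real.sin x - Real.cos x) := by nlinarith
    have hB : 0 < Real.sqrt 2 - (Real.sin x - Real.cos x) := by nlinarith
    have hd1 : HasDerivAt (fun y => Real.sin y - Real.cos y) (Real.cos x + Real.sin x) x := by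
      exact ((Real.hasDerivAt_sin x).sub (Real.hasDerivAt_cos x)).congr_deriv (by ring)
    have hdA : HasDerivAt (fun y => Real.sqrt 2 + (Real.sin y - Real.cos y))
        (Real.cos x + Real.sin x) x := by
      exact ((hasDerivAt_const x (Real.sqrt 2)).add hd1).congr_deriv (by ring)
    have hdB : HasDerivAt (fun y => Real.sqrt 2 - (Real.sin y - Real.cos y))
        (-(Real.cos x + Real.sin x)) x := by
      exact ((hasDerivAt_const x (Real.sqrt 2)).sub hd1).congr_deriv (by ring)
    have hF := ((hdA.log hA.ne').sub (hdB.log hB.ne')).const_mul ((Real.sqrt 2)⁻¹/2)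
    refine hF.congr_deriv ?_
    symm
    have hkey : (Real.sqrt 2 + (Real.sin x - Real.cos x)) * (Real.sqrt 2 - (Real.sin x - Real.cos x))
        = (Real.cos x + Real.sin x)^2 := by linear_combination h2 - 2*hp
    have hcne : Real.cos x + Real.sin x ≠ 0 := by linarith
    have h0 : Real.sqrt 2 ≠ 0 := by nlinarith
    rw [div_sub_div _ _ hA.ne' hB.ne', hkey]
    field_simp
    ring_nf

  · exact (hcont.mono (by rw [Set.uIcc_of_le hpi])).intervalIntegrable


/-- The arithmetic mean
`A(r) = (2/r) Σ_{n=0}^{2r-1} 1/(cos(nπ/(4r)) + sin(nπ/(4r)))` of the π-values of the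
parametric discretization of a circle of radius `r` converges, as the positive integer
`r` tends to infinity, to `(4√2/π)·(ln(2+√2) - ln(2-√2))`. -/
theorem mean_pi_parametric_discretization_tendsto :
    Tendsto
      (fun r : ℕ =>
        (2 / (r : ℝ)) * ∑ n ∈ Finset.range (2 * r),
          1 / (Real.cos (n * Real.pi / (4 * r)) + Real.sin (n * Real.pi / (4 * r))))
      atTop
      (nhds ((4 * Real.sqrt 2 / Real.pi) *
        (Real.log (2 + Real.sqrt 2) - Real.log (2 - Real.sqrt 2)))) := by
  obtain ⟨h2, h1⟩ := sqrt2_facts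
  have hpi := Real.pi_pos
  have hcont : ContinuousOn (fun x => 1/(Real.cos x + Real.sin x)) (Set.Icc 0 (Real.pi/2)) := by
    apply ContinuousOn.div continuousOn_const (by fun_prop)
    intro x hx
    have hs : 0 ≤ Real.sin x := Real.sin_nonneg_of_nonneg_of_le_pi hx.1
      (le_trans hx.2 (by linarith))
    have hc : 0 ≤ Real.cos x := Real.cos_nonneg_of_mem_Icc ⟨by linarith [hx.1], hx.2⟩
    have hp := Real.sin_sq_add_cos_sq x
    nlinarith
  have hRS := riemann_sum_tendsto (f := fun x => 1/(Real.cos x + Real.sin x))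
    (b := Real.pi/2) (by linarith) hcont
  have h2r : Tendsto (fun r : ℕ => 2 * r) atTop atTop :=
    Filter.tendsto_atTop_atTop.mpr (fun m => ⟨m, fun a ha => by omega⟩)
  have hcomp := (hRS.comp h2r).const_mul (8/Real.pi)
  have hval : (8/Real.pi) * ((Real.sqrt 2)⁻¹ * (Real.log (Real.sqrt 2 + 1)
      - Real.log (Real.sqrt 2 - 1)))
      = (4 * Real.sqrt 2 / Real.pi) * (Real.log (2 + Real.sqrt 2) - Real.log (2 - Real.sqrt 2)) := by
    have h0 : Real.sqrt 2 ≠ 0 := by nlinarith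
    have e1 : (2:ℝ) + Real.sqrt 2 = Real.sqrt 2 * (Real.sqrt 2 + 1) := by linear_combination -h2
    have e2 : (2:ℝ) - Real.sqrt 2 = Real.sqrt 2 * (Real.sqrt 2 - 1) := by linear_combination -h2
    have eD : Real.log (2 + Real.sqrt 2) - Real.log (2 - Real.sqrt 2)
        = Real.log (Real.sqrt 2 + 1) - Real.log (Real.sqrt 2 - 1) := by
      rw [e1, e2, Real.log_mul h0 (by nlinarith), Real.log_mul h0 (by nlinarith)]
      ring
    rw [eD]
    have hπ : Real.pi ≠ 0 := hpi.ne'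
    have hco : (8:ℝ)/Real.pi * (Real.sqrt 2)⁻¹ = 4 * Real.sqrt 2 / Real.pi := by
      field_simp
      linear_combination (-4) * h2
    calc 8/Real.pi * ((Real.sqrt 2)⁻¹ * (Real.log (Real.sqrt 2 + 1) - Real.log (Real.sqrt 2 - 1)))
        = (8/Real.pi * (Real.sqrt 2)⁻¹) * (Real.log (Real.sqrt 2 + 1) - Real.log (Real.sqrt 2 - 1)) := by ring
      _ = 4 * Real.sqrt 2 / Real.pi * (Real.log (Real.sqrt 2 + 1) - Real.log (Real.sqrt 2 - 1)) := by
          rw [hco]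
  rw [← hval]
  have hfun : ∀ r : ℕ,
      ((fun s => (8/Real.pi) * s) ∘ ((fun N : ℕ => ∑ n ∈ Finset.range N,
        ((Real.pi/2) / (N:ℝ)) * (fun x => 1/(Real.cos x + Real.sin x)) ((n:ℝ) * ((Real.pi/2) / (N:ℝ)))) ∘
        (fun r : ℕ => 2 * r))) r
      = (2 / (r : ℝ)) * ∑ n ∈ Finset.range (2 * r),
          1 / (Real.cos (n * Real.pi / (4 * r)) + Real.sin (n * Real.pi / (4 * r))) := by
    intro r
    rcases Nat.eq_zero_or_pos r with hr | hr
    · subst hr; simp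
    · have hrne : (r:ℝ) ≠ 0 := Nat.cast_ne_zero.mpr hr.ne'
      have hd : (Real.pi/2) / (((2*r:ℕ)):ℝ) = Real.pi / (4 * r) := by
        push_cast
        rw [div_div]
        congr 1
        ring
      have harg : ∀ n : ℕ, (n:ℝ) * ((Real.pi/2) / ((2*r:ℕ):ℝ)) = (n:ℝ) * Real.pi / (4 * r) := by
        intro n; rw [hd, mul_div_assoc]
      simp only [Function.comp_apply]
      rw [Finset.sum_congr rfl (fun n _ => by rw [harg n])]
      rw [← Finset.mul_sum, ← mul_assoc]
      congr 1
      push_cast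
      field_simp
      ring
  have := hcomp.congr hfun
  rwa [integral_val] at this
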